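/- The generalized π value tends to 4 as p tends to infinity: the function p ↦ 2·Γ(1/p)² / (p·Γ(2/p)) tends to 4 as p → ∞, where Γ is the real Gamma function. -/

import Mathlib

open Real Filter Topology

/-- `π_p → 4` as `p → ∞`, using the formula `π_p = 2 Γ(1/p)² / (p Γ(2/p))`. -/
theorem pi_p_tendsto_four :
    Tendsto (fun p : ℝ => 2 * (Real.Gamma (1 / p)) ^ 2 / (p * Real.Gamma (2 / p)))
      atTop (𝓝 4) := by
  have hΓ : ContinuousAt Real.Gamma 1 := by
    apply (Real.differentiableAt_Gamma _).continuousAt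
    intro n h
    have : (0:ℝ) ≤ n := n.cast_nonneg
    nlinarith [h]
  have hz : Tendsto (fun p : ℝ => 1 / p) atTop (𝓝 0) := by
    simpa [one_div] using tendsto_inv_atTop_zero
  have h1 : Tendsto (fun p : ℝ => Real.Gamma (1 + 1 / p)) atTop (𝓝 1) := by
    have hadd : Tendsto (fun p : ℝ => 1 + 1 / p) atTop (𝓝 1) := by
      simpa using (tendsto_const_nhds : Tendsto (fun _ : ℝ => (1:ℝ)) atTop (𝓝 1)).add hz
    have := hΓ.tendsto.comp hadd
    simpa [Function.comp_def, Real.Gamma_one] using this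
  have h2 : Tendsto (fun p : ℝ => Real.Gamma (1 + 2 / p)) atTop (𝓝 1) := by
    have hz2 : Tendsto (fun p : ℝ => 2 / p) atTop (𝓝 0) := by
      have := hz.const_mul 2
      simpa [mul_one_div, div_eq_mul_inv] using this
    have hadd : Tendsto (fun p : ℝ => 1 + 2 / p) atTop (𝓝 1) := by
      simpa using (tendsto_const_nhds : Tendsto (fun _ : ℝ => (1:ℝ)) atTop (𝓝 1)).add hz2
    have := hΓ.tendsto.comp hadd
    simpa [Function.comp_def, Real.Gamma_one] using this
  have hmain : Tendsto (fun p : ℝ =>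
      4 * Real.Gamma (1 + 1 / p) ^ 2 / Real.Gamma (1 + 2 / p)) atTop (𝓝 4) := by
    have := ((h1.pow 2).const_mul 4).div h2 (by norm_num)
    simpa [Pi.div_def] using this
  refine hmain.congr' ?_
  filter_upwards [eventually_gt_atTop (0:ℝ)] with p hp
  have hp1 : (1:ℝ) / p ≠ 0 := by positivity
  have hp2 : (2:ℝ) / p ≠ 0 := by positivity
  have e1 : Real.Gamma (1 + 1 / p) = (1 / p) * Real.Gamma (1 / p) := by
    rw [add_comm]; exact Real.Gamma_add_one hp1
  have e2 : Real.Gamma (1 + 2 / p) = (2 / p) * Real.Gamma (2 / p) := by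
    rw [add_comm]; exact Real.Gamma_add_one hp2
  have hΓ2 : Real.Gamma (2 / p) ≠ 0 := (Real.Gamma_pos_of_pos (by positivity)).ne'
  rw [e1, e2]
  field_simp
  ring
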